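/- arXiv:2007.04166 — 5 statements merged into one kernel-verified Lean document; each statement's English description precedes it below -/
import Mathlib

section
/- Let σ : ℝ → ℝ be continuous and such that its restrictions are dense in C(K) for every compact K ⊂ ℝ^d (i.e., H_σ is dense in C(K) in sup norm for every compact K). Then for every f ∈ L^1_{loc}(ℝ^d) and every ε > 0 there exists g ∈ H_σ with d(f, g) < ε, where d(f, g) := Σ_{k=1}^∞ 2^{−k} ‖(f−g)·1_{[−k,k]^d}‖_1 / (1 + ‖(f−g)·1_{[−k,k]^d}‖_1). -/
open MeasureTheory

/-- A shallow neural network on `ℝ^d` with activation function `σ`. -/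
def IsNN {d : ℕ} (σ : ℝ → ℝ) (g : (Fin d → ℝ) → ℝ) : Prop :=
  ∃ (M : ℕ) (α b : Fin M → ℝ) (w : Fin M → Fin d → ℝ),
    ∀ x, g x = ∑ j, α j * σ ((∑ i, w j i * x i) + b j)

/-- The centered cube `[−k, k]^d` in `ℝ^d`. -/
def cube (d k : ℕ) : Set (Fin d → ℝ) := {x | ∀ i, |x i| ≤ (k : ℝ)}

/-- The metric `d(f,g) = Σ_{k≥1} 2^{−k} ‖(f−g)1_{[−k,k]^d}‖₁ / (1 + ‖(f−g)1_{[−k,k]^d}‖₁)`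
on `L¹_loc(ℝ^d)`. -/
noncomputable def locMetric {d : ℕ} (f g : (Fin d → ℝ) → ℝ) : ℝ :=
  ∑' k : ℕ, (2 : ℝ)⁻¹ ^ (k + 1) *
    ((∫ x in cube d (k + 1), |f x - g x|) / (1 + ∫ x in cube d (k + 1), |f x - g x|))

lemma isNN_continuous {d : ℕ} {σ : ℝ → ℝ} (hσ : Continuous σ) {g : (Fin d → ℝ) → ℝ}
    (hg : IsNN σ g) : Continuous g := by
  obtain ⟨M, α, b, w, hg⟩ := hg
  have : g = fun x => ∑ j, α j * σ ((∑ i, w j i * x i) + b j) := funext hg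
  rw [this]; fun_prop

lemma cube_eq (d k : ℕ) : cube d k = Set.Icc (fun _ => -(k:ℝ)) (fun _ => (k:ℝ)) := by
  ext x; simp [cube, Set.mem_Icc, Pi.le_def, abs_le, forall_and]

lemma cube_mono {d : ℕ} {a b : ℕ} (h : a ≤ b) : cube d a ⊆ cube d b :=
  fun x hx i => (hx i).trans (Nat.cast_le.mpr h)

/-- if `H_σ` is dense in `C(K)` (sup norm) for every compact `K ⊂ ℝ^d`, then
every locally integrable `f` can be approximated by shallow networks in the metric of
`L¹_loc(ℝ^d)`. -/
theorem stmt6 {d : ℕ} (σ : ℝ → ℝ) (hσc : Continuous σ)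
    (hdense : ∀ K : Set (Fin d → ℝ), IsCompact K →
      ∀ f : (Fin d → ℝ) → ℝ, Continuous f → ∀ ε : ℝ, 0 < ε →
        ∃ g, IsNN σ g ∧ ∀ x ∈ K, |f x - g x| < ε)
    (f : (Fin d → ℝ) → ℝ) (hf : LocallyIntegrable f volume)
    (ε : ℝ) (hε : 0 < ε) :
    ∃ g, IsNN σ g ∧ locMetric f g < ε := by
  obtain ⟨N, hN⟩ := exists_pow_lt_of_lt_one (half_pos hε) (by norm_num : (2:ℝ)⁻¹ < 1)
  set K := cube d N with hKdef
  have hKc : IsCompact K := by rw [hKdef, cube_eq]; exact isCompact_Icc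
  have hKm : MeasurableSet K := by rw [hKdef, cube_eq]; exact measurableSet_Icc
  have hfK : IntegrableOn f K volume := hf.integrableOn_isCompact hKc
  have hf1 : Integrable (K.indicator f) volume := (integrable_indicator_iff hKm).mpr hfK
  obtain ⟨h, hhcs, hhint, hhc, hhint'⟩ := hf1.exists_hasCompactSupport_integral_sub_le
    (show (0:ℝ) < ε/8 by linarith)
  set V := (volume K).toReal with hV
  have hV0 : 0 ≤ V := ENNReal.toReal_nonneg
  have hε' : (0:ℝ) < ε / (4 * (V + 1)) := by positivity
  obtain ⟨g, hgNN, hg⟩ := hdense K hKc h hhc _ hε'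
  refine ⟨g, hgNN, ?_⟩
  have hgc : Continuous g := isNN_continuous hσc hgNN
  have hhK : IntegrableOn h K volume := (hhc.continuousOn).integrableOn_compact hKc
  have hgK : IntegrableOn g K volume := (hgc.continuousOn).integrableOn_compact hKc
  have hfgK : IntegrableOn (fun x => |f x - g x|) K volume := (hfK.sub hgK).abs
  set δ := ∫ x in K, |f x - g x| with hδ
  -- bound δ
  have hfh : ∫ x in K, |f x - h x| ≤ ε/8 := by
    have e1 : ∫ x in K, |f x - h x| = ∫ x in K, ‖K.indicator f x - h x‖ := by
      refine setIntegral_congr_fun hKm fun x hx => ?_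
      rw [Set.indicator_of_mem hx, Real.norm_eq_abs]
    rw [e1]
    refine le_trans (setIntegral_le_integral ((hf1.sub hhint').norm) ?_) hhint
    exact Filter.Eventually.of_forall fun x => norm_nonneg _
  have hhg : ∫ x in K, |h x - g x| ≤ ε/4 := by
    have e1 : ∫ x in K, |h x - g x| ≤ ∫ _x in K, ε / (4 * (V + 1)) := by
      refine setIntegral_mono_on ((hhK.sub hgK).abs) (integrableOn_const ?_) hKm
        fun x hx => (hg x hx).le
      exact hKc.measure_lt_top.ne
    rw [setIntegral_const, smul_eq_mul, measureReal_def, ← hV] at e1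
    refine e1.trans ?_
    rw [mul_div_assoc', div_le_div_iff₀ (by positivity) (by norm_num : (0:ℝ) < 4)]
    nlinarith
  have hA : IntegrableOn (fun x => |f x - h x|) K volume := by
    simpa [IntegrableOn] using (hfK.sub hhK).abs
  have hB : IntegrableOn (fun x => |h x - g x|) K volume := by
    simpa [IntegrableOn] using (hhK.sub hgK).abs
  have hδle : δ ≤ ε/2 := by
    have e1 : δ ≤ ∫ x in K, (|f x - h x| + |h x - g x|) := by
      refine setIntegral_mono hfgK (hA.add hB) fun x => ?_
      exact abs_sub_le _ _ _
    rw [integral_add hA hB] at e1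
    linarith
  have hδ0 : 0 ≤ δ := setIntegral_nonneg hKm fun x _ => abs_nonneg _
  -- the series
  set I : ℕ → ℝ := fun k => ∫ x in cube d (k+1), |f x - g x| with hI
  set term : ℕ → ℝ := fun k => (2:ℝ)⁻¹ ^ (k+1) * (I k / (1 + I k)) with hterm
  have hI0 : ∀ k, 0 ≤ I k := fun k => setIntegral_nonneg
    (by rw [cube_eq]; exact measurableSet_Icc) fun x _ => abs_nonneg _
  have hfrac1 : ∀ k, I k / (1 + I k) ≤ 1 := fun k =>
    div_le_one_of_le₀ (by linarith [hI0 k]) (by linarith [hI0 k])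
  have hfrac0 : ∀ k, 0 ≤ I k / (1 + I k) := fun k =>
    div_nonneg (hI0 k) (by linarith [hI0 k])
  have htnn : ∀ k, 0 ≤ term k := fun k => mul_nonneg (by positivity) (hfrac0 k)
  have htle : ∀ k, term k ≤ (2:ℝ)⁻¹ ^ (k+1) := fun k => by
    have h1 := hfrac1 k
    have h2 : (0:ℝ) < (2:ℝ)⁻¹ ^ (k+1) := by positivity
    simp only [hterm]
    nlinarith
  have hgeo : Summable (fun k : ℕ => (2:ℝ)⁻¹ ^ (k+1)) := by
    simp_rw [pow_succ]
    exact (summable_geometric_of_lt_one (by norm_num) (by norm_num)).mul_right _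
  have hsum : Summable term := Summable.of_nonneg_of_le htnn htle hgeo
  have hgeosum : ∑' k : ℕ, (2:ℝ)⁻¹ ^ (k+1) = 1 := by
    have e1 : ∑' k : ℕ, (2:ℝ)⁻¹ ^ (k+1) = ∑' k : ℕ, (2:ℝ)⁻¹ ^ k * 2⁻¹ :=
      tsum_congr fun k => pow_succ _ _
    rw [e1, tsum_mul_right,
      tsum_geometric_of_lt_one (by norm_num) (by norm_num : (2:ℝ)⁻¹ < 1)]
    norm_num
  have hsplit : ∑ k ∈ Finset.range N, term k + ∑' k : ℕ, term (k + N) = ∑' k, term k :=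
    Summable.sum_add_tsum_nat_add N hsum
  have hhead : ∑ k ∈ Finset.range N, term k ≤ δ := by
    have e1 : ∀ k ∈ Finset.range N, term k ≤ (2:ℝ)⁻¹ ^ (k+1) * δ := by
      intro k hk
      rw [Finset.mem_range] at hk
      have hIk : I k ≤ δ := by
        refine setIntegral_mono_set hfgK
          (Filter.Eventually.of_forall fun x => abs_nonneg _) ?_
        exact HasSubset.Subset.eventuallyLE (cube_mono hk)
      have hfr : I k / (1 + I k) ≤ δ := (div_le_self (hI0 k) (by linarith [hI0 k])).trans hIk
      have h2 : (0:ℝ) < (2:ℝ)⁻¹ ^ (k+1) := by positivity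
      simp only [hterm]
      exact mul_le_mul_of_nonneg_left hfr h2.le
    refine (Finset.sum_le_sum e1).trans ?_
    rw [← Finset.sum_mul]
    have : ∑ k ∈ Finset.range N, (2:ℝ)⁻¹ ^ (k+1) ≤ 1 := by
      rw [← hgeosum]
      exact Summable.sum_le_tsum _ (fun k _ => by positivity) hgeo
    nlinarith
  have htail : ∑' k : ℕ, term (k + N) ≤ (2:ℝ)⁻¹ ^ N := by
    have e1 : ∑' k : ℕ, term (k + N) ≤ ∑' k : ℕ, (2:ℝ)⁻¹ ^ (k + N + 1) := by
      refine Summable.tsum_le_tsum (fun k => htle (k + N)) ((summable_nat_add_iff N).mpr hsum) ?_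
      have := (summable_nat_add_iff (f := fun k : ℕ => (2:ℝ)⁻¹ ^ (k+1)) N).mpr hgeo
      simpa [add_assoc, add_comm, add_left_comm] using this
    refine e1.trans ?_
    have e2 : ∑' k : ℕ, (2:ℝ)⁻¹ ^ (k + N + 1) = (2:ℝ)⁻¹ ^ N := by
      have e3 : ∑' k : ℕ, (2:ℝ)⁻¹ ^ (k + N + 1)
          = ∑' k : ℕ, (2:ℝ)⁻¹ ^ k * ((2:ℝ)⁻¹ ^ N * 2⁻¹) :=
        tsum_congr fun k => by rw [pow_add, pow_add, pow_one, mul_assoc]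
      rw [e3, tsum_mul_right,
        tsum_geometric_of_lt_one (by norm_num) (by norm_num : (2:ℝ)⁻¹ < 1)]
      ring_nf
    rw [e2]
  have : locMetric f g = ∑' k, term k := rfl
  rw [this, ← hsplit]
  linarith
end

section
/- Let p : ℕ → [1,∞) be an exponent function. Then ℓ^{p(·)} = ℓ^∞ as sets (every bounded sequence lies in ℓ^{p(·)}) if and only if ‖1_ℕ‖_{p(·)} < ∞, i.e. there exists λ > 0 with Σ_{j=1}^∞ λ^{−p(j)} ≤ 1. -/
open ENNReal

/-- The Luxemburg norm of the variable sequence space `ℓ^{p(·)}`, valued in `ℝ≥0∞`. -/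
noncomputable def seqNorm (p x : ℕ → ℝ) : ℝ≥0∞ :=
  sInf (ENNReal.ofReal '' {l : ℝ | 0 < l ∧
    ∑' j : ℕ, ENNReal.ofReal ((|x j| / l) ^ (p j)) ≤ 1})

/-- `ℓ^{p(·)} = ℓ^∞` as sets (i.e. every bounded sequence lies in `ℓ^{p(·)}`,
the converse inclusion always holding) if and only if `‖1_ℕ‖_{p(·)} < ∞`, i.e. there is
`λ > 0` with `Σ_j λ^{−p(j)} ≤ 1`. -/
theorem stmt13 (p : ℕ → ℝ) (hp : ∀ j, 1 ≤ p j) :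
    (∀ x : ℕ → ℝ, (∃ C : ℝ, ∀ j, |x j| ≤ C) → seqNorm p x < ⊤) ↔
      ∃ l : ℝ, 0 < l ∧ ∑' j : ℕ, ENNReal.ofReal (l ^ (-(p j))) ≤ 1 := by
  constructor
  · intro h
    have h1 := h (fun _ => 1) ⟨1, fun j => by simp⟩
    unfold seqNorm at h1
    set S := {l : ℝ | 0 < l ∧
      ∑' j : ℕ, ENNReal.ofReal ((|(fun _ => (1:ℝ)) j| / l) ^ (p j)) ≤ 1} with hS
    have hSne : S.Nonempty := by
      by_contra hne
      rw [Set.not_nonempty_iff_eq_empty] at hne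
      rw [hne] at h1
      simp at h1
    obtain ⟨l, hl, hsum⟩ := hSne
    refine ⟨l, hl, ?_⟩
    have heq : ∀ j, l ^ (-(p j)) = (|(fun _ => (1:ℝ)) j| / l) ^ (p j) := by
      intro j
      simp only [abs_one, one_div]
      rw [Real.rpow_neg hl.le, ← Real.inv_rpow hl.le]
    calc ∑' j, ENNReal.ofReal (l ^ (-(p j)))
        = ∑' j, ENNReal.ofReal ((|(fun _ => (1:ℝ)) j| / l) ^ (p j)) := by
          exact tsum_congr fun j => by rw [heq j]
      _ ≤ 1 := hsum
  · rintro ⟨l, hl, hsum⟩ x ⟨C, hC⟩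
    have hC0 : 0 ≤ C := le_trans (abs_nonneg _) (hC 0)
    set lam := (C + 1) * l with hlam
    have hlam0 : 0 < lam := mul_pos (by linarith) hl
    have key : ∀ j, ENNReal.ofReal ((|x j| / lam) ^ (p j)) ≤
        ENNReal.ofReal (l ^ (-(p j))) := by
      intro j
      apply ENNReal.ofReal_le_ofReal
      have h1 : |x j| / lam ≤ l⁻¹ := by
        rw [div_le_iff₀ hlam0, hlam]
        calc |x j| ≤ C := hC j
          _ ≤ C + 1 := by linarith
          _ = l⁻¹ * ((C + 1) * l) := by field_simp
      have h2 := Real.rpow_le_rpow (div_nonneg (abs_nonneg _) hlam0.le) h1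
        (le_trans zero_le_one (hp j))
      rwa [Real.rpow_neg hl.le, ← Real.inv_rpow hl.le]
    have hsum' : ∑' j, ENNReal.ofReal ((|x j| / lam) ^ (p j)) ≤ 1 :=
      le_trans (ENNReal.tsum_le_tsum key) hsum
    calc seqNorm p x ≤ ENNReal.ofReal lam := sInf_le ⟨lam, ⟨hlam0, hsum'⟩, rfl⟩
      _ < ⊤ := ENNReal.ofReal_lt_top
end

section
/- Let p : ℕ → [1,∞) be an exponent function with ‖1_ℕ‖_{p(·)} < ∞, and let σ : ℝ → ℝ be bounded, sigmoidal and non-constant. Let H_σ be the set of sequences k ↦ Σ_{j=1}^M α_j σ(w_j k + b_j). Then the closure of H_σ in the ‖·‖_{p(·)} norm equals c, the space of convergent real sequences. -/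
open ENNReal Filter

/-- A sequence obtained from a shallow neural network with activation `σ`. -/
def IsNNSeq (σ : ℝ → ℝ) (y : ℕ → ℝ) : Prop :=
  ∃ (M : ℕ) (α w b : Fin M → ℝ), ∀ k : ℕ, y k = ∑ j, α j * σ (w j * (k : ℝ) + b j)

/-- A sigmoidal activation function: finite limits at `+∞` and `−∞`. -/
def Sigmoidal (σ : ℝ → ℝ) : Prop :=
  ∃ cp cm : ℝ, Tendsto σ atTop (nhds cp) ∧ Tendsto σ atBot (nhds cm)

section Aux

variable {σ : ℝ → ℝ}

lemma nn_single (a w b : ℝ) : IsNNSeq σ (fun k => a * σ (w * (k:ℝ) + b)) :=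
  ⟨1, fun _ => a, fun _ => w, fun _ => b, fun k => by simp⟩

lemma nn_zero : IsNNSeq σ (fun _ => 0) :=
  ⟨0, Fin.elim0, Fin.elim0, Fin.elim0, fun k => by simp⟩

lemma nn_add {y z : ℕ → ℝ} (hy : IsNNSeq σ y) (hz : IsNNSeq σ z) :
    IsNNSeq σ (fun k => y k + z k) := by
  obtain ⟨M, α, w, b, hy⟩ := hy
  obtain ⟨M', α', w', b', hz⟩ := hz
  refine ⟨M + M', Fin.append α α', Fin.append w w', Fin.append b b', fun k => ?_⟩
  rw [Fin.sum_univ_add]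
  simp [Fin.append_left, Fin.append_right, hy k, hz k]

lemma nn_smul {y : ℕ → ℝ} (c : ℝ) (hy : IsNNSeq σ y) : IsNNSeq σ (fun k => c * y k) := by
  obtain ⟨M, α, w, b, hy⟩ := hy
  refine ⟨M, fun j => c * α j, w, b, fun k => ?_⟩
  simp only [hy k, Finset.mul_sum, mul_assoc]

lemma nn_const (hσnc : ∃ s t : ℝ, σ s ≠ σ t) (c : ℝ) : IsNNSeq σ (fun _ => c) := by
  obtain ⟨s, t, hst⟩ := hσnc
  have hd : σ s - σ t ≠ 0 := sub_ne_zero.mpr hst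
  have h := nn_add (nn_single (σ := σ) (c / (σ s - σ t)) 0 s)
    (nn_single (σ := σ) (-(c / (σ s - σ t))) 0 t)
  convert h using 2 with k
  field_simp
  ring

lemma nn_sum {ι : Type*} (s : Finset ι) (f : ι → ℕ → ℝ)
    (h : ∀ i ∈ s, IsNNSeq σ (f i)) : IsNNSeq σ (fun k => ∑ i ∈ s, f i k) := by
  classical
  induction s using Finset.induction with
  | empty => simpa using (nn_zero (σ := σ))
  | insert _ _ hnot ih =>
    rename_i a s
    simp only [Finset.sum_insert hnot]
    exact nn_add (h a (Finset.mem_insert_self a s))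
      (ih fun i hi => h i (Finset.mem_insert_of_mem hi))

lemma nn_tendsto (hσs : Sigmoidal σ) {y : ℕ → ℝ} (hy : IsNNSeq σ y) :
    ∃ L, Tendsto y atTop (nhds L) := by
  obtain ⟨cp, cm, hcp, hcm⟩ := hσs
  obtain ⟨M, α, w, b, hy⟩ := hy
  have key : ∀ j : Fin M, ∃ Lj, Tendsto (fun k : ℕ => α j * σ (w j * (k:ℝ) + b j))
      atTop (nhds Lj) := by
    intro j
    rcases lt_trichotomy (w j) 0 with h | h | h
    · refine ⟨α j * cm, Tendsto.const_mul _ (hcm.comp ?_)⟩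
      apply tendsto_atBot_add_const_right
      exact (tendsto_natCast_atTop_atTop (R := ℝ)).const_mul_atTop_of_neg h
    · exact ⟨α j * σ (b j), by simp [h]⟩
    · refine ⟨α j * cp, Tendsto.const_mul _ (hcp.comp ?_)⟩
      apply tendsto_atTop_add_const_right
      exact (tendsto_natCast_atTop_atTop (R := ℝ)).const_mul_atTop h
  choose Ls hLs using key
  exact ⟨∑ j, Ls j, (tendsto_finset_sum _ fun j _ => hLs j).congr fun k => (hy k).symm⟩

lemma nn_indicator (hσs : Sigmoidal σ) (hσnc : ∃ s t : ℝ, σ s ≠ σ t) (j : ℕ)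
    {η : ℝ} (hη : 0 < η) :
    ∃ u : ℕ → ℝ, IsNNSeq σ u ∧ ∀ k : ℕ, |u k - (if k = j then 1 else 0)| ≤ η := by
  obtain ⟨cp, cm, hcp, hcm⟩ := hσs
  by_cases hc : cp = cm
  · -- bump case: equal limits on both sides
    subst hc
    obtain ⟨s, t, hst⟩ := hσnc
    obtain ⟨b0, hb0⟩ : ∃ b0, σ b0 ≠ cp := by
      by_cases h : σ s = cp
      · exact ⟨t, fun ht => hst (by rw [h, ht])⟩
      · exact ⟨s, h⟩
    have hd : σ b0 - cp ≠ 0 := sub_ne_zero.mpr hb0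
    set d : ℝ := σ b0 - cp with hd_def
    have hdpos : 0 < |d| := abs_pos.mpr hd
    have hηd : 0 < η * |d| := mul_pos hη hdpos
    obtain ⟨T, hT⟩ := eventually_atTop.mp (hcp.eventually
      (Metric.closedBall_mem_nhds cp hηd))
    obtain ⟨T', hT'⟩ := eventually_atBot.mp (hcm.eventually
      (Metric.closedBall_mem_nhds cp hηd))
    set w : ℝ := |T| + |T'| + |b0| + 1 with hw_def
    have hw : 0 < w := by positivity
    refine ⟨fun k => d⁻¹ * σ (w * (k:ℝ) + (b0 - w * j)) + (fun _ : ℕ => -(cp / d)) k,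
      nn_add (nn_single d⁻¹ w (b0 - w * j)) (nn_const ⟨s, t, hst⟩ (-(cp / d))), fun k => ?_⟩
    by_cases hk : k = j
    · subst hk
      have harg : w * (k:ℝ) + (b0 - w * k) = b0 := by ring
      simp only []
      rw [if_pos trivial, harg]
      have : d⁻¹ * σ b0 + -(cp / d) - 1 = 0 := by
        rw [hd_def]; field_simp; ring
      rw [this, abs_zero]
      exact hη.le
    · rw [if_neg hk]
      have key : |σ (w * (k:ℝ) + (b0 - w * j)) - cp| ≤ η * |d| := by
        rcases Nat.lt_or_ge k j with hlt | hge
        · have hkj : (k:ℝ) + 1 ≤ (j:ℝ) := by exact_mod_cast hlt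
          have h0 : w * ((k:ℝ) - j) ≤ w * (-1) :=
            mul_le_mul_of_nonneg_left (by linarith) hw.le
          have harg : w * (k:ℝ) + (b0 - w * j) ≤ T' := by
            nlinarith [neg_abs_le T', abs_nonneg T, le_abs_self b0]
          have := hT' _ harg
          rwa [Real.dist_eq] at this
        · have hjk : (j:ℝ) + 1 ≤ (k:ℝ) := by
            have : j < k := lt_of_le_of_ne hge fun h => hk h.symm
            exact_mod_cast this
          have h0 : w * (1:ℝ) ≤ w * ((k:ℝ) - j) :=
            mul_le_mul_of_nonneg_left (by linarith) hw.le
          have harg : T ≤ w * (k:ℝ) + (b0 - w * j) := by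
            nlinarith [le_abs_self T, abs_nonneg T', neg_abs_le b0]
          have := hT _ harg
          rwa [Real.dist_eq] at this
      have heq : d⁻¹ * σ (w * (k:ℝ) + (b0 - w * j)) + -(cp / d) - 0
          = d⁻¹ * (σ (w * (k:ℝ) + (b0 - w * j)) - cp) := by
        rw [div_eq_inv_mul]; ring
      rw [heq, abs_mul, abs_inv]
      calc |d|⁻¹ * |σ (w * (k:ℝ) + (b0 - w * j)) - cp|
          ≤ |d|⁻¹ * (η * |d|) := by
            exact mul_le_mul_of_nonneg_left key (by positivity)
        _ = η := by field_simp
  · -- step case: distinct limits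
    have hd : cp - cm ≠ 0 := sub_ne_zero.mpr hc
    set d : ℝ := cp - cm with hd_def
    have hdpos : 0 < |d| := abs_pos.mpr hd
    have hηd : 0 < η * |d| / 2 := by positivity
    obtain ⟨T, hT⟩ := eventually_atTop.mp (hcp.eventually
      (Metric.closedBall_mem_nhds cp hηd))
    obtain ⟨T', hT'⟩ := eventually_atBot.mp (hcm.eventually
      (Metric.closedBall_mem_nhds cm hηd))
    set w : ℝ := 2 * |T| + 2 * |T'| + 2 with hw_def
    have hw : 0 < w := by positivity
    have habs : ∀ A B : ℝ, |A| ≤ η * |d| / 2 → |B| ≤ η * |d| / 2 →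
        |d⁻¹ * (A - B)| ≤ η := by
      intro A B h1 h2
      rw [abs_mul, abs_inv]
      calc |d|⁻¹ * |A - B| ≤ |d|⁻¹ * (η * |d|) := by
            apply mul_le_mul_of_nonneg_left _ (by positivity)
            calc |A - B| ≤ |A| + |B| := abs_sub A B
              _ ≤ η * |d| := by linarith
        _ = η := by field_simp
    have hTmem : ∀ r : ℝ, T ≤ r → |σ r - cp| ≤ η * |d| / 2 := by
      intro r hr
      have := hT r hr
      rwa [Real.dist_eq] at this
    have hTmem' : ∀ r : ℝ, r ≤ T' → |σ r - cm| ≤ η * |d| / 2 := by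
      intro r hr
      have := hT' r hr
      rwa [Real.dist_eq] at this
    refine ⟨fun k => d⁻¹ * σ (w * (k:ℝ) + (w / 2 - w * j)) +
        (-d⁻¹) * σ (w * (k:ℝ) + (-(w / 2) - w * j)),
      nn_add (nn_single d⁻¹ w (w / 2 - w * j)) (nn_single (-d⁻¹) w (-(w / 2) - w * j)),
      fun k => ?_⟩
    rcases Nat.lt_trichotomy k j with hlt | heq' | hgt
    · rw [if_neg (Nat.ne_of_lt hlt)]
      have hkj : (k:ℝ) + 1 ≤ (j:ℝ) := by exact_mod_cast hlt
      have h0 : w * ((k:ℝ) - j) ≤ w * (-1) :=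
        mul_le_mul_of_nonneg_left (by linarith) hw.le
      have h1 := hTmem' (w * (k:ℝ) + (w / 2 - w * j))
        (by nlinarith [neg_abs_le T', abs_nonneg T])
      have h2 := hTmem' (w * (k:ℝ) + (-(w / 2) - w * j))
        (by nlinarith [neg_abs_le T', abs_nonneg T])
      have heq : d⁻¹ * σ (w * (k:ℝ) + (w / 2 - w * j)) +
          (-d⁻¹) * σ (w * (k:ℝ) + (-(w / 2) - w * j)) - 0
          = d⁻¹ * ((σ (w * (k:ℝ) + (w / 2 - w * j)) - cm)
            - (σ (w * (k:ℝ) + (-(w / 2) - w * j)) - cm)) := by ring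
      rw [heq]
      exact habs _ _ h1 h2
    · subst heq'
      rw [if_pos rfl]
      have h1 := hTmem (w * (k:ℝ) + (w / 2 - w * k))
        (by nlinarith [le_abs_self T, abs_nonneg T'])
      have h2 := hTmem' (w * (k:ℝ) + (-(w / 2) - w * k))
        (by nlinarith [neg_abs_le T', abs_nonneg T])
      have heq : d⁻¹ * σ (w * (k:ℝ) + (w / 2 - w * k)) +
          (-d⁻¹) * σ (w * (k:ℝ) + (-(w / 2) - w * k)) - 1
          = d⁻¹ * ((σ (w * (k:ℝ) + (w / 2 - w * k)) - cp)
            - (σ (w * (k:ℝ) + (-(w / 2) - w * k)) - cm)) := by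
        field_simp
        ring
      rw [heq]
      exact habs _ _ h1 h2
    · rw [if_neg (Nat.ne_of_gt hgt)]
      have hjk : (j:ℝ) + 1 ≤ (k:ℝ) := by exact_mod_cast hgt
      have h0 : w * (1:ℝ) ≤ w * ((k:ℝ) - j) :=
        mul_le_mul_of_nonneg_left (by linarith) hw.le
      have h1 := hTmem (w * (k:ℝ) + (w / 2 - w * j))
        (by nlinarith [le_abs_self T, abs_nonneg T'])
      have h2 := hTmem (w * (k:ℝ) + (-(w / 2) - w * j))
        (by nlinarith [le_abs_self T, abs_nonneg T'])
      have heq : d⁻¹ * σ (w * (k:ℝ) + (w / 2 - w * j)) +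
          (-d⁻¹) * σ (w * (k:ℝ) + (-(w / 2) - w * j)) - 0
          = d⁻¹ * ((σ (w * (k:ℝ) + (w / 2 - w * j)) - cp)
            - (σ (w * (k:ℝ) + (-(w / 2) - w * j)) - cp)) := by ring
      rw [heq]
      exact habs _ _ h1 h2

lemma seqNorm_lt_bound {p z : ℕ → ℝ} (hp : ∀ j, 1 ≤ p j) {ε : ℝ}
    (h : seqNorm p z < ENNReal.ofReal ε) (k : ℕ) : |z k| < ε := by
  obtain ⟨a, ha, hlt⟩ := sInf_lt_iff.mp h
  obtain ⟨l, ⟨hl0, hsum⟩, rfl⟩ := ha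
  have hlε : l < ε := by
    by_contra hle
    push_neg at hle
    exact absurd (ENNReal.ofReal_le_ofReal hle) (not_le.mpr hlt)
  have hterm : ENNReal.ofReal ((|z k| / l) ^ p k) ≤ 1 :=
    le_trans (ENNReal.le_tsum k) hsum
  have h1 : (|z k| / l) ^ p k ≤ 1 := ENNReal.ofReal_le_one.mp hterm
  have h2 : |z k| / l ≤ 1 := by
    by_contra hgt
    push_neg at hgt
    have hlt1 : (1:ℝ) ^ p k < (|z k| / l) ^ p k :=
      Real.rpow_lt_rpow (by norm_num) hgt (by linarith [hp k])
    rw [Real.one_rpow] at hlt1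
    linarith
  calc |z k| ≤ l := (div_le_one hl0).mp h2
    _ < ε := hlε

lemma exists_l0 {p : ℕ → ℝ} (hone : seqNorm p (fun _ => 1) < ⊤) :
    ∃ l0 : ℝ, 0 < l0 ∧ ∑' j : ℕ, ENNReal.ofReal ((1 / l0) ^ p j) ≤ 1 := by
  obtain ⟨a, ha, _⟩ := sInf_lt_iff.mp hone
  obtain ⟨l, ⟨hl0, hsum⟩, rfl⟩ := ha
  simp only [abs_one] at hsum
  exact ⟨l, hl0, hsum⟩

lemma seqNorm_le_of_sup {p z : ℕ → ℝ} (hp : ∀ j, 1 ≤ p j) {l0 c : ℝ} (hl0 : 0 < l0)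
    (hsum : ∑' j : ℕ, ENNReal.ofReal ((1 / l0) ^ p j) ≤ 1) (hc : 0 < c)
    (hz : ∀ k, |z k| ≤ c) : seqNorm p z ≤ ENNReal.ofReal (l0 * c) := by
  apply sInf_le
  refine ⟨l0 * c, ⟨by positivity, ?_⟩, rfl⟩
  refine le_trans (ENNReal.tsum_le_tsum fun k => ?_) hsum
  apply ENNReal.ofReal_le_ofReal
  apply Real.rpow_le_rpow (by positivity) ?_ (by linarith [hp k])
  rw [div_le_div_iff₀ (by positivity) hl0]
  nlinarith [hz k, abs_nonneg (z k)]

end Aux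

/-- if `‖1_ℕ‖_{p(·)} < ∞` and `σ` is bounded, sigmoidal and non-constant,
then the closure of `H_σ` in the `‖·‖_{p(·)}` norm is exactly `c`, the space of convergent
sequences. -/
theorem stmt14 (p : ℕ → ℝ) (hp : ∀ j, 1 ≤ p j)
    (hone : seqNorm p (fun _ => 1) < ⊤)
    (σ : ℝ → ℝ) (hσb : ∃ B : ℝ, ∀ t : ℝ, |σ t| ≤ B)
    (hσs : Sigmoidal σ) (hσnc : ∃ s t : ℝ, σ s ≠ σ t) :
    ∀ x : ℕ → ℝ,
      ((∀ ε : ℝ, 0 < ε → ∃ y : ℕ → ℝ, IsNNSeq σ y ∧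
          seqNorm p (fun k => x k - y k) < ENNReal.ofReal ε)
        ↔ ∃ L : ℝ, Tendsto x atTop (nhds L)) := by
  intro x
  constructor
  · -- approximable implies convergent
    intro h
    have key : ∀ ε : ℝ, 0 < ε → ∃ y : ℕ → ℝ, (∃ Ly, Tendsto y atTop (nhds Ly)) ∧
        ∀ k, |x k - y k| < ε := by
      intro ε hε
      obtain ⟨y, hy, hn⟩ := h ε hε
      exact ⟨y, nn_tendsto hσs hy, fun k => seqNorm_lt_bound hp hn k⟩
    have hcauchy : CauchySeq x := by
      rw [Metric.cauchySeq_iff']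
      intro ε hε
      obtain ⟨y, ⟨Ly, hLy⟩, hb⟩ := key (ε / 3) (by linarith)
      obtain ⟨N, hN⟩ := Metric.cauchySeq_iff'.mp hLy.cauchySeq (ε / 3) (by linarith)
      refine ⟨N, fun n hn => ?_⟩
      have h1 := hb n
      have h2 := hb N
      have h3 := hN n hn
      rw [Real.dist_eq] at h3 ⊢
      have hsplit : x n - x N = (x n - y n) + (y n - y N) + (y N - x N) := by ring
      rw [hsplit]
      have t1 : |(x n - y n) + (y n - y N) + (y N - x N)|
          ≤ |x n - y n| + |y n - y N| + |y N - x N| := by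
        calc |(x n - y n) + (y n - y N) + (y N - x N)|
            ≤ |(x n - y n) + (y n - y N)| + |y N - x N| := abs_add_le _ _
          _ ≤ |x n - y n| + |y n - y N| + |y N - x N| := by
              linarith [abs_add_le (x n - y n) (y n - y N)]
      have t2 : |y N - x N| = |x N - y N| := abs_sub_comm _ _
      linarith
    exact cauchySeq_tendsto_of_complete hcauchy
  · -- convergent implies approximable
    rintro ⟨L, hL⟩ ε hε
    obtain ⟨l0, hl0, hsuml⟩ := exists_l0 hone
    set δ : ℝ := ε / (2 * l0) with hδ_def
    have hδ : 0 < δ := by positivity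
    obtain ⟨N, hN⟩ := Metric.tendsto_atTop.mp hL (δ / 2) (by positivity)
    set S : ℝ := ∑ j ∈ Finset.range N, |x j - L| with hS_def
    have hS : 0 ≤ S := Finset.sum_nonneg fun j _ => abs_nonneg _
    have hηpos : 0 < δ / (2 * (S + 1)) := by positivity
    have hu : ∀ j : ℕ, ∃ u, IsNNSeq σ u ∧
        ∀ k, |u k - (if k = j then 1 else 0)| ≤ δ / (2 * (S + 1)) :=
      fun j => nn_indicator hσs hσnc j hηpos
    choose u hu1 hu2 using hu
    refine ⟨fun k => (fun _ : ℕ => L) k + ∑ j ∈ Finset.range N, (x j - L) * u j k,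
      nn_add (nn_const hσnc L)
        (nn_sum (Finset.range N) (fun j k => (x j - L) * u j k)
          fun j _ => nn_smul (x j - L) (hu1 j)), ?_⟩
    have hbound : ∀ k, |x k - (L + ∑ j ∈ Finset.range N, (x j - L) * u j k)| ≤ δ := by
      intro k
      have hsum_split : ∑ j ∈ Finset.range N, (x j - L) * u j k
          = (∑ j ∈ Finset.range N, (x j - L) * (if k = j then 1 else 0))
            + ∑ j ∈ Finset.range N, (x j - L) * (u j k - (if k = j then 1 else 0)) := by
        rw [← Finset.sum_add_distrib]
        exact Finset.sum_congr rfl fun j _ => by ring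
      have hsplit : x k - (L + ∑ j ∈ Finset.range N, (x j - L) * u j k)
          = (x k - L - ∑ j ∈ Finset.range N, (x j - L) * (if k = j then 1 else 0))
            - ∑ j ∈ Finset.range N, (x j - L) * (u j k - (if k = j then 1 else 0)) := by
        rw [hsum_split]; ring
      have hsum_e : ∑ j ∈ Finset.range N, (x j - L) * (if k = j then 1 else 0)
          = if k ∈ Finset.range N then x k - L else 0 := by
        simp only [mul_ite, mul_one, mul_zero]
        exact Finset.sum_ite_eq (Finset.range N) k (fun j => x j - L)
      have hA : |x k - L - ∑ j ∈ Finset.range N, (x j - L) * (if k = j then 1 else 0)|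
          ≤ δ / 2 := by
        by_cases hkN : k ∈ Finset.range N
        · rw [hsum_e, if_pos hkN]
          have : x k - L - (x k - L) = 0 := by ring
          rw [this, abs_zero]
          positivity
        · rw [hsum_e, if_neg hkN, sub_zero]
          have hk : N ≤ k := by simpa [Finset.mem_range, not_lt] using hkN
          have := hN k hk
          rw [Real.dist_eq] at this
          linarith
      have hB : |∑ j ∈ Finset.range N, (x j - L) * (u j k - (if k = j then 1 else 0))|
          ≤ δ / 2 := by
        have hη_eq : δ / (2 * (S + 1)) * (2 * (S + 1)) = δ :=
          div_mul_cancel₀ _ (by positivity)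
        calc |∑ j ∈ Finset.range N, (x j - L) * (u j k - (if k = j then 1 else 0))|
            ≤ ∑ j ∈ Finset.range N, |(x j - L) * (u j k - (if k = j then 1 else 0))| :=
              Finset.abs_sum_le_sum_abs _ _
          _ ≤ ∑ j ∈ Finset.range N, |x j - L| * (δ / (2 * (S + 1))) := by
              apply Finset.sum_le_sum
              intro j hj
              rw [abs_mul]
              exact mul_le_mul_of_nonneg_left (hu2 j k) (abs_nonneg _)
          _ = S * (δ / (2 * (S + 1))) := by rw [← Finset.sum_mul]
          _ ≤ δ / 2 := by nlinarith [hηpos.le, hS]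
      rw [hsplit]
      calc |(x k - L - ∑ j ∈ Finset.range N, (x j - L) * (if k = j then 1 else 0))
            - ∑ j ∈ Finset.range N, (x j - L) * (u j k - (if k = j then 1 else 0))|
          ≤ |x k - L - ∑ j ∈ Finset.range N, (x j - L) * (if k = j then 1 else 0)|
            + |∑ j ∈ Finset.range N, (x j - L) * (u j k - (if k = j then 1 else 0))| :=
            abs_sub _ _
        _ ≤ δ := by linarith
    have hle := seqNorm_le_of_sup hp hl0 hsuml hδ hbound
    calc seqNorm p (fun k => x k -
          ((fun _ : ℕ => L) k + ∑ j ∈ Finset.range N, (x j - L) * u j k))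
        ≤ ENNReal.ofReal (l0 * δ) := hle
      _ < ENNReal.ofReal ε := by
          have hlδ : l0 * δ = ε / 2 := by
            rw [hδ_def]
            field_simp
          rw [hlδ]
          exact (ENNReal.ofReal_lt_ofReal_iff hε).mpr (by linarith)
end

section
/- Let p : Ω → [1,∞) be an unbounded exponent function on Ω ⊆ ℝ^d. Then L^∞(Ω) ⊆ L^{p(·)}(Ω) if and only if w(Ω) := ‖[1_Ω]‖_Q < ∞, where ‖[f]‖_Q = inf{λ > 0 : ∫_Ω (|f(x)|/λ)^{p(x)} dx < ∞}. -/
open MeasureTheory ENNReal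

/-- The Luxemburg norm of the variable Lebesgue space `L^{p(·)}(Ω)`, valued in `ℝ≥0∞`. -/
noncomputable def luxNorm {d : ℕ} (Ω : Set (Fin d → ℝ)) (p f : (Fin d → ℝ) → ℝ) : ℝ≥0∞ :=
  sInf (ENNReal.ofReal '' {l : ℝ | 0 < l ∧
    ∫⁻ x in Ω, ENNReal.ofReal ((|f x| / l) ^ (p x)) ≤ 1})

/-- The quotient norm `‖[f]‖_Q = inf {λ > 0 : ∫_Ω (|f|/λ)^{p(x)} dx < ∞}`. -/
noncomputable def qNorm {d : ℕ} (Ω : Set (Fin d → ℝ)) (p f : (Fin d → ℝ) → ℝ) : ℝ≥0∞ :=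
  sInf (ENNReal.ofReal '' {l : ℝ | 0 < l ∧
    ∫⁻ x in Ω, ENNReal.ofReal ((|f x| / l) ^ (p x)) < ⊤})

/-- for an unbounded exponent `p` on `Ω ⊆ ℝ^d`,
`L^∞(Ω) ⊆ L^{p(·)}(Ω)` if and only if `w(Ω) = ‖[1_Ω]‖_Q < ∞`. -/
theorem stmt15 {d : ℕ} (Ω : Set (Fin d → ℝ)) (p : (Fin d → ℝ) → ℝ)
    (hpm : Measurable p) (hp1 : ∀ x ∈ Ω, 1 ≤ p x)
    (hpunb : essSup (fun x => ENNReal.ofReal (p x)) (volume.restrict Ω) = ⊤) :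
    (∀ f : (Fin d → ℝ) → ℝ, Measurable f →
        (∃ C : ℝ, ∀ᵐ x ∂(volume.restrict Ω), |f x| ≤ C) → luxNorm Ω p f < ⊤)
      ↔ qNorm Ω p (fun _ => 1) < ⊤ := by
  constructor
  · intro h
    have h1 := h (fun _ => 1) measurable_const ⟨1, ae_of_all _ fun x => by simp⟩
    refine lt_of_le_of_lt ?_ h1
    unfold luxNorm qNorm
    refine sInf_le_sInf (Set.image_mono ?_)
    rintro l ⟨hl, hle⟩
    exact ⟨hl, lt_of_le_of_lt hle one_lt_top⟩
  · intro hq f hfm ⟨C, hC⟩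
    -- extract λ from qNorm finiteness
    obtain ⟨lam, ⟨hlam, hI⟩, -⟩ : ∃ lam, (0 < lam ∧
        ∫⁻ x in Ω, ENNReal.ofReal ((|(1:ℝ)| / lam) ^ (p x)) < ⊤) ∧ True := by
      unfold qNorm at hq
      by_contra hcon
      push_neg at hcon
      have : {l : ℝ | 0 < l ∧ ∫⁻ x in Ω,
          ENNReal.ofReal ((|(fun _ : Fin d → ℝ => (1:ℝ)) x| / l) ^ (p x)) < ⊤} = ∅ := by
        ext l; simp only [Set.mem_setOf_eq, Set.mem_empty_iff_false, iff_false]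
        intro ⟨hl, hlt⟩
        exact hcon l ⟨hl, by simpa using hlt⟩
      rw [this] at hq
      simp at hq
    simp only [abs_one] at hI
    set I : ℝ≥0∞ := ∫⁻ x in Ω, ENNReal.ofReal ((1 / lam) ^ (p x)) with hIdef
    set C' : ℝ := max C 1 with hC'
    set t : ℝ := max I.toReal 1 with ht
    have ht1 : 1 ≤ t := le_max_right _ _
    have ht0 : 0 < t := lt_of_lt_of_le one_pos ht1
    have hC'1 : 1 ≤ C' := le_max_right _ _
    have hC'0 : 0 < C' := lt_of_lt_of_le one_pos hC'1
    set l : ℝ := t * lam * C' with hl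
    have hl0 : 0 < l := by positivity
    -- show ofReal l is in the lux set
    have hmem : (0 < l ∧ ∫⁻ x in Ω, ENNReal.ofReal ((|f x| / l) ^ (p x)) ≤ 1) := by
      refine ⟨hl0, ?_⟩
      -- replace |f| by min |f| C' a.e.
      have hcong : ∫⁻ x in Ω, ENNReal.ofReal ((|f x| / l) ^ (p x))
          = ∫⁻ x in Ω, ENNReal.ofReal ((min |f x| C' / l) ^ (p x)) := by
        refine lintegral_congr_ae ?_
        filter_upwards [hC] with x hx
        have : min |f x| C' = |f x| := min_eq_left (hx.trans (le_max_left _ _))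
        rw [this]
      rw [hcong]
      have hmono : ∫⁻ x in Ω, ENNReal.ofReal ((min |f x| C' / l) ^ (p x))
          ≤ ∫⁻ x in Ω, ENNReal.ofReal ((1 / t) * (1 / lam) ^ (p x)) := by
        have hgm : Measurable fun x => (1 / lam) ^ (p x) := by
          have : (fun x => (1 / lam) ^ (p x))
              = fun x => Real.exp (Real.log (1 / lam) * p x) := by
            funext x
            rw [Real.rpow_def_of_pos (by positivity)]
          rw [this]
          exact Real.continuous_exp.measurable.comp (hpm.const_mul _)
        refine setLIntegral_mono (hgm.const_mul _).ennreal_ofReal fun x hx => ?_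
        refine ENNReal.ofReal_le_ofReal ?_
        have hp1x := hp1 x hx
        have hp0x : (0:ℝ) ≤ p x := le_trans zero_le_one hp1x
        have hF0 : 0 ≤ min |f x| C' := le_min (abs_nonneg _) hC'0.le
        have hFl : min |f x| C' / l ≤ 1 / (t * lam) := by
          rw [div_le_div_iff₀ hl0 (by positivity)]
          calc min |f x| C' * (t * lam) ≤ C' * (t * lam) := by
                have := min_le_right |f x| C'
                nlinarith
            _ = 1 * l := by rw [hl]; ring
        calc (min |f x| C' / l) ^ (p x) ≤ (1 / (t * lam)) ^ (p x) :=
              Real.rpow_le_rpow (by positivity) hFl hp0x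
          _ = (1 / t) ^ (p x) * (1 / lam) ^ (p x) := by
              rw [← Real.mul_rpow (by positivity) (by positivity)]
              congr 1; field_simp
          _ ≤ (1 / t) * (1 / lam) ^ (p x) := by
              have h1t : (1:ℝ)/t ≤ 1 := by
                rw [div_le_one ht0]; exact ht1
              have := Real.rpow_le_rpow_of_exponent_ge (by positivity : (0:ℝ) < 1/t) h1t hp1x
              rw [Real.rpow_one] at this
              have hlamp : (0:ℝ) ≤ (1/lam) ^ (p x) := Real.rpow_nonneg (by positivity) _
              nlinarith
      refine hmono.trans ?_
      have heq : ∫⁻ x in Ω, ENNReal.ofReal ((1 / t) * (1 / lam) ^ (p x))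
          = ENNReal.ofReal (1 / t) * I := by
        rw [hIdef]
        rw [← lintegral_const_mul' _ _ ofReal_ne_top]
        refine lintegral_congr fun x => ?_
        rw [← ENNReal.ofReal_mul (by positivity)]
      rw [heq]
      have hIt : I ≤ ENNReal.ofReal t := by
        rw [ht]
        calc I = ENNReal.ofReal I.toReal := (ofReal_toReal hI.ne).symm
          _ ≤ ENNReal.ofReal (max I.toReal 1) := ofReal_le_ofReal (le_max_left _ _)
      calc ENNReal.ofReal (1/t) * I ≤ ENNReal.ofReal (1/t) * ENNReal.ofReal t :=
            mul_le_mul_right hIt _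
        _ = ENNReal.ofReal (1/t * t) := (ENNReal.ofReal_mul (by positivity)).symm
        _ = 1 := by rw [one_div_mul_cancel ht0.ne', ofReal_one]
    calc luxNorm Ω p f ≤ ENNReal.ofReal l := sInf_le ⟨l, hmem, rfl⟩
      _ < ⊤ := ofReal_lt_top
end

section
/- Let Ω = [1,∞), let p : Ω → [1,∞) be an unbounded exponent function, bounded on every compact subset, with L^∞(Ω) ⊂ L^{p(·)}(Ω). Let σ : ℝ → ℝ be bounded, sigmoidal, non-constant. If f ∈ L^{p(·)}(Ω) satisfies: for every ε > 0 there is g_ε(x) = Σ_{j=1}^n α_j σ(w_j x + b_j) with ‖f − g_ε‖_{L^{p(·)}(Ω)} < ε, then there exists β ∈ ℝ such that ‖[f − β·1_Ω]‖_Q = 0, where ‖[h]‖_Q = inf{λ > 0 : ∫_Ω (|h(x)|/λ)^{p(x)} dx < ∞}. -/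
open MeasureTheory ENNReal Filter

/-- The Luxemburg norm of the variable Lebesgue space `L^{p(·)}(Ω)`, `Ω ⊆ ℝ`. -/
noncomputable def luxNormR (Ω : Set ℝ) (p f : ℝ → ℝ) : ℝ≥0∞ :=
  sInf (ENNReal.ofReal '' {l : ℝ | 0 < l ∧
    ∫⁻ x in Ω, ENNReal.ofReal ((|f x| / l) ^ (p x)) ≤ 1})

/-- The quotient norm `‖[f]‖_Q = inf {λ > 0 : ∫_Ω (|f|/λ)^{p(x)} dx < ∞}`. -/
noncomputable def qNormR (Ω : Set ℝ) (p f : ℝ → ℝ) : ℝ≥0∞ :=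
  sInf (ENNReal.ofReal '' {l : ℝ | 0 < l ∧
    ∫⁻ x in Ω, ENNReal.ofReal ((|f x| / l) ^ (p x)) < ⊤})

/-- A one-dimensional shallow neural network with activation function `σ`. -/
def IsNN1 (σ g : ℝ → ℝ) : Prop :=
  ∃ (M : ℕ) (α w b : Fin M → ℝ), ∀ x : ℝ, g x = ∑ j, α j * σ (w j * x + b j)

lemma lux_extract (Ω : Set ℝ) (p h : ℝ → ℝ) (C : ℝ≥0∞)
    (hC : luxNormR Ω p h < C) :
    ∃ l : ℝ, 0 < l ∧ ENNReal.ofReal l < C ∧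
      ∫⁻ x in Ω, ENNReal.ofReal ((|h x| / l) ^ (p x)) ≤ 1 := by
  rw [luxNormR] at hC
  obtain ⟨a, ha, haC⟩ := sInf_lt_iff.mp hC
  obtain ⟨l, ⟨hl, hml⟩, rfl⟩ := ha
  exact ⟨l, hl, haC, hml⟩

lemma nn_tendsto_s17 (σ : ℝ → ℝ) (hσs : Sigmoidal σ) (g : ℝ → ℝ) (hg : IsNN1 σ g) :
    ∃ β : ℝ, Tendsto g atTop (nhds β) := by
  obtain ⟨cp, cm, hcp, hcm⟩ := hσs
  obtain ⟨M, α, w, b, hgeq⟩ := hg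
  have key : ∀ j : Fin M, ∃ c : ℝ,
      Tendsto (fun x : ℝ => α j * σ (w j * x + b j)) atTop (nhds (α j * c)) := by
    intro j
    rcases lt_trichotomy (w j) 0 with hw | hw | hw
    · refine ⟨cm, Tendsto.const_mul _ (hcm.comp ?_)⟩
      exact tendsto_atBot_add_const_right _ _
        ((tendsto_const_mul_atBot_of_neg hw).2 tendsto_id)
    · refine ⟨σ (b j), ?_⟩
      simp only [hw, zero_mul, zero_add]
      exact tendsto_const_nhds
    · refine ⟨cp, Tendsto.const_mul _ (hcp.comp ?_)⟩
      exact tendsto_atTop_add_const_right _ _ ((tendsto_const_mul_atTop_of_pos hw).2 tendsto_id)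
  choose c hc using key
  refine ⟨∑ j, α j * c j, ?_⟩
  have : Tendsto (fun x : ℝ => ∑ j, α j * σ (w j * x + b j)) atTop
      (nhds (∑ j, α j * c j)) := tendsto_finset_sum _ fun j _ => hc j
  exact this.congr (fun x => (hgeq x).symm)

lemma meas_blow (p f g : ℝ → ℝ) (hfm : Measurable f)
    (hp1 : ∀ x ∈ Set.Ici (1 : ℝ), 1 ≤ p x)
    (β l δ R : ℝ) (hl : 0 < l) (hR1 : 1 ≤ R)
    (hg : ∀ x ≥ R, |g x - β| ≤ δ)
    (hm : ∫⁻ x in Set.Ici (1 : ℝ), ENNReal.ofReal ((|f x - g x| / l) ^ (p x)) ≤ 1) :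
    (volume.restrict (Set.Ici (1 : ℝ))) {x | R < x ∧ l + δ ≤ |f x - β|} ≤ 1 ∧
      MeasurableSet {x | R < x ∧ l + δ ≤ |f x - β|} := by
  set B := {x | R < x ∧ l + δ ≤ |f x - β|} with hB
  have hBmeas : MeasurableSet B := by
    have h1 : MeasurableSet {x : ℝ | l + δ ≤ |f x - β|} :=
      measurableSet_le measurable_const ((hfm.sub measurable_const).abs)
    have h2 : B = Set.Ioi R ∩ {x | l + δ ≤ |f x - β|} := by
      ext x; simp [hB, Set.mem_Ioi]
    rw [h2]; exact measurableSet_Ioi.inter h1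
  refine ⟨?_, hBmeas⟩
  have hind : ∀ x, B.indicator (fun _ => (1 : ℝ≥0∞)) x ≤
      ENNReal.ofReal ((|f x - g x| / l) ^ (p x)) := by
    intro x
    by_cases hx : x ∈ B
    · rw [Set.indicator_of_mem hx]
      have hx1 : (1 : ℝ) ≤ x := hR1.trans hx.1.le
      have hpx : 1 ≤ p x := hp1 x hx1
      have h1 : l ≤ |f x - g x| := by
        have h2 : |f x - β| ≤ |f x - g x| + |g x - β| := by
          calc |f x - β| = |(f x - g x) + (g x - β)| := by ring_nf
          _ ≤ _ := abs_add_le _ _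
        have := hg x hx.1.le
        have := hx.2
        linarith
      have hr : (1 : ℝ) ≤ |f x - g x| / l := (one_le_div hl).2 h1
      have : (1 : ℝ) ≤ (|f x - g x| / l) ^ (p x) := Real.one_le_rpow hr (by linarith)
      simpa using ENNReal.one_le_ofReal.mpr this
    · rw [Set.indicator_of_notMem hx]; exact zero_le
  calc (volume.restrict (Set.Ici (1 : ℝ))) B
      = ∫⁻ x, B.indicator (fun _ => (1 : ℝ≥0∞)) x ∂(volume.restrict (Set.Ici (1 : ℝ))) :=
        (lintegral_indicator_one hBmeas).symm
    _ ≤ _ := (lintegral_mono hind).trans hm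

lemma beta_sep (p f g1 g2 : ℝ → ℝ) (hfm : Measurable f)
    (hp1 : ∀ x ∈ Set.Ici (1 : ℝ), 1 ≤ p x)
    (β1 β2 l1 l2 : ℝ) (hl1 : 0 < l1) (hl2 : 0 < l2)
    (ht1 : Tendsto g1 atTop (nhds β1)) (ht2 : Tendsto g2 atTop (nhds β2))
    (hm1 : ∫⁻ x in Set.Ici (1 : ℝ), ENNReal.ofReal ((|f x - g1 x| / l1) ^ (p x)) ≤ 1)
    (hm2 : ∫⁻ x in Set.Ici (1 : ℝ), ENNReal.ofReal ((|f x - g2 x| / l2) ^ (p x)) ≤ 1) :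
    |β1 - β2| ≤ l1 + l2 := by
  refine le_of_forall_pos_le_add fun ε hε => ?_
  set δ := ε / 2 with hδdef
  have hδ : 0 < δ := by positivity
  obtain ⟨N1, hN1⟩ := Metric.tendsto_atTop.1 ht1 δ hδ
  obtain ⟨N2, hN2⟩ := Metric.tendsto_atTop.1 ht2 δ hδ
  set R := max (max N1 N2) 1 with hR
  have hR1 : (1 : ℝ) ≤ R := le_max_right _ _
  have hg1 : ∀ x ≥ R, |g1 x - β1| ≤ δ := fun x hx =>
    (le_of_lt (by rw [← Real.dist_eq]; exact hN1 x (le_trans ((le_max_left _ _).trans (le_max_left _ _)) hx)))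
  have hg2 : ∀ x ≥ R, |g2 x - β2| ≤ δ := fun x hx =>
    (le_of_lt (by rw [← Real.dist_eq]; exact hN2 x (le_trans ((le_max_right _ _).trans (le_max_left _ _)) hx)))
  obtain ⟨hμ1, hB1m⟩ := meas_blow p f g1 hfm hp1 β1 l1 δ R hl1 hR1 hg1 hm1
  obtain ⟨hμ2, hB2m⟩ := meas_blow p f g2 hfm hp1 β2 l2 δ R hl2 hR1 hg2 hm2
  set B1 := {x | R < x ∧ l1 + δ ≤ |f x - β1|}
  set B2 := {x | R < x ∧ l2 + δ ≤ |f x - β2|}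
  set μ := volume.restrict (Set.Ici (1 : ℝ)) with hμ
  -- the tail has infinite measure
  have htail : μ (Set.Ioi R) = ⊤ := by
    rw [hμ, Measure.restrict_apply measurableSet_Ioi]
    have h2 : Set.Ioi R ∩ Set.Ici 1 = Set.Ioi R :=
      Set.inter_eq_self_of_subset_left (fun x (hx : x ∈ Set.Ioi R) => hR1.trans (le_of_lt hx))
    rw [h2]; exact Real.volume_Ioi
  -- there must be a point in the tail outside B1 ∪ B2
  have hW : (Set.Ioi R \ (B1 ∪ B2)).Nonempty := by
    rw [Set.nonempty_iff_ne_empty]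
    intro hemp
    have hsub : Set.Ioi R ⊆ B1 ∪ B2 := by
      intro x hx
      by_contra hxn
      exact Set.eq_empty_iff_forall_notMem.1 hemp x ⟨hx, hxn⟩
    have : μ (Set.Ioi R) ≤ μ B1 + μ B2 :=
      (measure_mono hsub).trans (measure_union_le _ _)
    rw [htail] at this
    have : (⊤ : ℝ≥0∞) ≤ 1 + 1 := this.trans (add_le_add hμ1 hμ2)
    simp at this
  obtain ⟨x, hxT, hxB⟩ := hW
  have hx1 : ¬ (l1 + δ ≤ |f x - β1|) := fun h => hxB (Or.inl ⟨hxT, h⟩)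
  have hx2 : ¬ (l2 + δ ≤ |f x - β2|) := fun h => hxB (Or.inr ⟨hxT, h⟩)
  push_neg at hx1 hx2
  have : |β1 - β2| ≤ |f x - β1| + |f x - β2| := by
    calc |β1 - β2| = |(f x - β2) - (f x - β1)| := by ring_nf
    _ ≤ |f x - β2| + |f x - β1| := abs_sub _ _
    _ = _ := by ring
  linarith

/-- on `Ω = [1,∞)` with an unbounded exponent `p` (bounded on compacts,
`L^∞(Ω) ⊂ L^{p(·)}(Ω)`) and `σ` bounded, sigmoidal, non-constant: if
`f ∈ L^{p(·)}(Ω)` can be approximated arbitrarily well by shallow networks in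
`L^{p(·)}(Ω)`-norm, then there is `β ∈ ℝ` with `‖[f − β·1_Ω]‖_Q = 0`. -/
theorem stmt17 (p : ℝ → ℝ) (hpm : Measurable p)
    (hp1 : ∀ x ∈ Set.Ici (1 : ℝ), 1 ≤ p x)
    (hpunb : essSup (fun x => ENNReal.ofReal (p x))
      (volume.restrict (Set.Ici (1 : ℝ))) = ⊤)
    (hploc : ∀ K : Set ℝ, K ⊆ Set.Ici (1 : ℝ) → IsCompact K → ∃ B : ℝ, ∀ x ∈ K, p x ≤ B)
    (hinc : ∀ f : ℝ → ℝ, Measurable f →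
      (∃ C : ℝ, ∀ x ∈ Set.Ici (1 : ℝ), |f x| ≤ C) → luxNormR (Set.Ici 1) p f < ⊤)
    (σ : ℝ → ℝ) (hσb : ∃ B : ℝ, ∀ t : ℝ, |σ t| ≤ B)
    (hσs : Sigmoidal σ) (hσnc : ∃ s t : ℝ, σ s ≠ σ t)
    (f : ℝ → ℝ) (hfm : Measurable f) (hfp : luxNormR (Set.Ici 1) p f < ⊤)
    (happrox : ∀ ε : ℝ, 0 < ε → ∃ g : ℝ → ℝ, IsNN1 σ g ∧
      luxNormR (Set.Ici 1) p (fun x => f x - g x) < ENNReal.ofReal ε) :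
    ∃ β : ℝ, qNormR (Set.Ici 1) p (fun x => f x - β) = 0 := by
  classical
  -- constant function 1 is in the space
  obtain ⟨l0, hl0, -, hml0⟩ := lux_extract (Set.Ici 1) p (fun _ => (1 : ℝ)) ⊤
    (hinc (fun _ => (1 : ℝ)) measurable_const ⟨1, fun x _ => by norm_num⟩)
  have hml0' : ∫⁻ x in Set.Ici (1 : ℝ), ENNReal.ofReal ((1 / l0) ^ (p x)) ≤ 1 := by
    simpa using hml0
  -- f itself has finite norm
  obtain ⟨lf, hlf, -, hmlf⟩ := lux_extract (Set.Ici 1) p f ⊤ hfp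
  -- approximating sequence
  have hseq : ∀ n : ℕ, ∃ (g : ℝ → ℝ) (βn l : ℝ), Tendsto g atTop (nhds βn) ∧ 0 < l ∧
      l < 1 / (n + 1) ∧
      ∫⁻ x in Set.Ici (1 : ℝ), ENNReal.ofReal ((|f x - g x| / l) ^ (p x)) ≤ 1 := by
    intro n
    obtain ⟨g, hgNN, hglt⟩ := happrox (1 / (n + 1)) (by positivity)
    obtain ⟨l, hl, hllt, hm⟩ := lux_extract _ _ _ _ hglt
    obtain ⟨βn, hβn⟩ := nn_tendsto_s17 σ hσs g hgNN
    exact ⟨g, βn, l, hβn, hl,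
      (ENNReal.ofReal_lt_ofReal_iff (by positivity)).1 hllt, hm⟩
  choose G Bt L hGt hLpos hLlt hGm using hseq
  have hsep : ∀ n m : ℕ, |Bt n - Bt m| ≤ L n + L m := fun n m =>
    beta_sep p f (G n) (G m) hfm hp1 (Bt n) (Bt m) (L n) (L m) (hLpos n) (hLpos m)
      (hGt n) (hGt m) (hGm n) (hGm m)
  -- the sequence of limits is Cauchy
  have hcs : CauchySeq Bt := by
    rw [Metric.cauchySeq_iff']
    intro ε hε
    obtain ⟨N, hN⟩ := exists_nat_gt (2 / ε)
    refine ⟨N, fun n hn => ?_⟩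
    have h1 : |Bt n - Bt N| ≤ L n + L N := hsep n N
    have h2 : L n < 1 / (n + 1) := hLlt n
    have h3 : L N < 1 / (N + 1) := hLlt N
    have h4 : (1 : ℝ) / (n + 1) ≤ 1 / (N + 1) := by
      apply one_div_le_one_div_of_le (by positivity)
      exact_mod_cast by omega
    have h5 : (0 : ℝ) < N + 1 := by positivity
    have h6 : (2 : ℝ) / ε < N + 1 := by linarith
    have h7 : (2 : ℝ) / (N + 1) < ε := by
      rw [div_lt_iff₀ h5]
      rw [div_lt_iff₀ hε] at h6
      linarith
    rw [Real.dist_eq]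
    calc |Bt n - Bt N| ≤ L n + L N := h1
      _ < 1 / (n + 1) + 1 / (N + 1) := by linarith
      _ ≤ 2 / (N + 1) := by
          have he : (2 : ℝ) / (N + 1) = 1 / (N + 1) + 1 / (N + 1) := by ring
          linarith
      _ < ε := h7
  obtain ⟨β, hβ⟩ := cauchySeq_tendsto_of_complete hcs
  refine ⟨β, ?_⟩
  -- main finiteness claim
  have hfin : ∀ lam : ℝ, 0 < lam →
      ∫⁻ x in Set.Ici (1 : ℝ), ENNReal.ofReal ((|f x - β| / lam) ^ (p x)) < ⊤ := by
    intro lam hlam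
    set ε := lam / (2 + 8 * l0) with hεdef
    have hε : 0 < ε := by positivity
    have hε2 : ε ≤ lam / 2 := by
      rw [hεdef, div_le_div_iff₀ (by positivity) (by norm_num)]
      nlinarith
    obtain ⟨g, hgNN, hglt⟩ := happrox ε hε
    obtain ⟨l1, hl1, hl1lt, hm1⟩ := lux_extract _ _ _ _ hglt
    have hl1ε : l1 < ε := (ENNReal.ofReal_lt_ofReal_iff hε).1 hl1lt
    obtain ⟨βg, hβg⟩ := nn_tendsto_s17 σ hσs g hgNN
    have hβgβ : |βg - β| ≤ ε := by
      have hbn : ∀ n, |βg - Bt n| ≤ l1 + L n := fun n =>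
        beta_sep p f g (G n) hfm hp1 βg (Bt n) l1 (L n) hl1 (hLpos n) hβg (hGt n) hm1 (hGm n)
      have h2 : Tendsto (fun n => |βg - Bt n|) atTop (nhds |βg - β|) :=
        (tendsto_const_nhds.sub hβ).abs
      have hL0 : Tendsto L atTop (nhds 0) :=
        squeeze_zero (fun n => (hLpos n).le) (fun n => (hLlt n).le)
          tendsto_one_div_add_atTop_nhds_zero_nat
      have h3 : Tendsto (fun n => l1 + L n) atTop (nhds (l1 + 0)) :=
        tendsto_const_nhds.add hL0
      have h4 := le_of_tendsto_of_tendsto' h2 h3 hbn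
      rw [add_zero] at h4
      linarith
    obtain ⟨N, hN⟩ := Metric.tendsto_atTop.1 hβg ε hε
    set R := max N 1 with hRdef
    have hR1 : (1 : ℝ) ≤ R := le_max_right _ _
    have htail : ∀ x, R < x → |f x - β| ≤ |f x - g x| + 2 * ε := by
      intro x hx
      have h1 : |g x - βg| ≤ ε := by
        rw [← Real.dist_eq]
        exact (hN x ((le_max_left _ _).trans hx.le)).le
      have h2 : |f x - β| ≤ |f x - g x| + |g x - βg| + |βg - β| := by
        calc |f x - β| = |(f x - g x) + (g x - βg) + (βg - β)| := by ring_nf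
          _ ≤ |(f x - g x) + (g x - βg)| + |βg - β| := abs_add_le _ _
          _ ≤ |f x - g x| + |g x - βg| + |βg - β| := by
              have := abs_add_le (f x - g x) (g x - βg); linarith
      linarith
    set H : ℝ → ℝ≥0∞ := fun x => ENNReal.ofReal ((|f x - β| / lam) ^ (p x)) with hHdef
    set μ := volume.restrict (Set.Ici (1 : ℝ)) with hμdef
    set Bs := {x | R < x ∧ 4 * ε ≤ |f x - β|} with hBsdef
    have hBsm : MeasurableSet Bs := by
      have h1 : MeasurableSet {x : ℝ | 4 * ε ≤ |f x - β|} :=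
        measurableSet_le measurable_const ((hfm.sub measurable_const).abs)
      have h2 : Bs = Set.Ioi R ∩ {x | 4 * ε ≤ |f x - β|} := by
        ext x; simp [hBsdef, Set.mem_Ioi]
      rw [h2]; exact measurableSet_Ioi.inter h1
    have hptBs : ∀ x ∈ Bs, H x ≤ ENNReal.ofReal ((|f x - g x| / l1) ^ (p x)) := by
      intro x hx
      have hx1 : (1 : ℝ) ≤ x := hR1.trans hx.1.le
      have hpx : 0 ≤ p x := by linarith [hp1 x hx1]
      have h1 : |f x - β| ≤ |f x - g x| + 2 * ε := htail x hx.1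
      have h2 : 2 * ε ≤ |f x - β| / 2 := by linarith [hx.2]
      have h3 : |f x - β| / 2 ≤ |f x - g x| := by linarith
      have h4 : |f x - β| / lam ≤ |f x - g x| / l1 := by
        rw [div_le_div_iff₀ hlam hl1]
        nlinarith [abs_nonneg (f x - β), abs_nonneg (f x - g x)]
      exact ENNReal.ofReal_le_ofReal (Real.rpow_le_rpow (by positivity) h4 hpx)
    have hptT : ∀ x, R < x → x ∉ Bs → H x ≤ ENNReal.ofReal ((1 / l0) ^ (p x)) := by
      intro x hx hxB
      have hx1 : (1 : ℝ) ≤ x := hR1.trans hx.le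
      have hpx : 0 ≤ p x := by linarith [hp1 x hx1]
      have h1 : |f x - β| < 4 * ε := by
        by_contra h
        exact hxB ⟨hx, by linarith⟩
      have h2 : |f x - β| / lam ≤ 1 / l0 := by
        rw [div_le_div_iff₀ hlam hl0]
        have h3 : 4 * ε * l0 ≤ lam := by
          have he : ε * (2 + 8 * l0) = lam := by
            rw [hεdef]; field_simp
          nlinarith
        nlinarith [abs_nonneg (f x - β)]
      exact ENNReal.ofReal_le_ofReal (Real.rpow_le_rpow (by positivity) h2 hpx)
    have hsplit : ∫⁻ x, H x ∂μ =
        (∫⁻ x in Set.Iic R, H x ∂μ) + ∫⁻ x in Set.Ioi R, H x ∂μ := by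
      have h := (lintegral_add_compl (f := H) (μ := μ) (A := Set.Iic R) measurableSet_Iic).symm
      rwa [Set.compl_Iic] at h
    have htailfin : ∫⁻ x in Set.Ioi R, H x ∂μ ≤ 2 := by
      set ν := μ.restrict (Set.Ioi R) with hνdef
      have hsplit2 : ∫⁻ x, H x ∂ν = (∫⁻ x in Bs, H x ∂ν) + ∫⁻ x in Bsᶜ, H x ∂ν :=
        (lintegral_add_compl (f := H) (μ := ν) hBsm).symm
      have hterm1 : ∫⁻ x in Bs, H x ∂ν ≤ 1 := by
        have hind : ∀ x, Bs.indicator H x ≤ ENNReal.ofReal ((|f x - g x| / l1) ^ (p x)) := by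
          intro x
          by_cases hx : x ∈ Bs
          · rw [Set.indicator_of_mem hx]; exact hptBs x hx
          · rw [Set.indicator_of_notMem hx]; exact zero_le
        calc ∫⁻ x in Bs, H x ∂ν = ∫⁻ x, Bs.indicator H x ∂ν :=
              (lintegral_indicator hBsm H).symm
          _ ≤ ∫⁻ x, ENNReal.ofReal ((|f x - g x| / l1) ^ (p x)) ∂μ :=
              lintegral_mono' Measure.restrict_le_self hind
          _ ≤ 1 := hm1
      have hterm2 : ∫⁻ x in Bsᶜ, H x ∂ν ≤ 1 := by
        have hae1 : ∀ᵐ x ∂(ν.restrict Bsᶜ), x ∈ Set.Ioi R :=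
          Eventually.filter_mono (ae_mono Measure.restrict_le_self)
            (ae_restrict_mem measurableSet_Ioi)
        have hae2 : ∀ᵐ x ∂(ν.restrict Bsᶜ), x ∈ Bsᶜ := ae_restrict_mem hBsm.compl
        have hae : ∀ᵐ x ∂(ν.restrict Bsᶜ), H x ≤ ENNReal.ofReal ((1 / l0) ^ (p x)) :=
          hae2.mp (hae1.mono fun x h1 h2 => hptT x h1 h2)
        calc ∫⁻ x in Bsᶜ, H x ∂ν ≤ ∫⁻ x, ENNReal.ofReal ((1 / l0) ^ (p x)) ∂(ν.restrict Bsᶜ) :=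
              lintegral_mono_ae hae
          _ ≤ ∫⁻ x, ENNReal.ofReal ((1 / l0) ^ (p x)) ∂μ :=
              lintegral_mono' (le_trans Measure.restrict_le_self Measure.restrict_le_self)
                (le_refl _)
          _ ≤ 1 := hml0'
      calc ∫⁻ x in Set.Ioi R, H x ∂μ = ∫⁻ x, H x ∂ν := rfl
        _ = (∫⁻ x in Bs, H x ∂ν) + ∫⁻ x in Bsᶜ, H x ∂ν := hsplit2
        _ ≤ 1 + 1 := add_le_add hterm1 hterm2
        _ = 2 := by norm_num
    have hcomp : ∫⁻ x in Set.Iic R, H x ∂μ < ⊤ := by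
      obtain ⟨Bd, hBd⟩ := hploc (Set.Icc 1 R) (fun x hx => hx.1) isCompact_Icc
      set K1 := max 1 (2 * lf / lam) with hK1def
      set K2 := max 1 (2 * |β| / lam) with hK2def
      have hK1one : (1 : ℝ) ≤ K1 := le_max_left _ _
      have hK2one : (1 : ℝ) ≤ K2 := le_max_left _ _
      set C1 := K1 ^ Bd with hC1def
      set C2 := K2 ^ Bd with hC2def
      have hC1 : 0 ≤ C1 := Real.rpow_nonneg (by linarith) _
      have hC2 : 0 ≤ C2 := Real.rpow_nonneg (by linarith) _
      have hpt : ∀ x, x ∈ Set.Ici (1 : ℝ) → x ∈ Set.Iic R →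
          H x ≤ ENNReal.ofReal (C1 * (|f x| / lf) ^ (p x)) + ENNReal.ofReal C2 := by
        intro x hx1 hx2
        have hq1 : 1 ≤ p x := hp1 x hx1
        have hq0 : 0 ≤ p x := by linarith
        have hqB : p x ≤ Bd := hBd x ⟨hx1, hx2⟩
        have step5 : (2 * |f x| / lam) ^ (p x) ≤ C1 * (|f x| / lf) ^ (p x) := by
          have e1 : 2 * |f x| / lam = (2 * lf / lam) * (|f x| / lf) := by
            field_simp
          have e2 : 2 * |f x| / lam ≤ K1 * (|f x| / lf) := by
            rw [e1]
            exact mul_le_mul_of_nonneg_right (le_max_right _ _) (by positivity)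
          calc (2 * |f x| / lam) ^ (p x) ≤ (K1 * (|f x| / lf)) ^ (p x) :=
                Real.rpow_le_rpow (by positivity) e2 hq0
            _ = K1 ^ (p x) * (|f x| / lf) ^ (p x) :=
                Real.mul_rpow (by linarith) (by positivity)
            _ ≤ C1 * (|f x| / lf) ^ (p x) := by
                apply mul_le_mul_of_nonneg_right _ (by positivity)
                exact Real.rpow_le_rpow_of_exponent_le hK1one hqB
        have step6 : (2 * |β| / lam) ^ (p x) ≤ C2 := by
          calc (2 * |β| / lam) ^ (p x) ≤ K2 ^ (p x) :=
                Real.rpow_le_rpow (by positivity) (le_max_right _ _) hq0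
            _ ≤ C2 := Real.rpow_le_rpow_of_exponent_le hK2one hqB
        have hmax : (|f x - β| / lam) ^ (p x) ≤
            (2 * |f x| / lam) ^ (p x) + (2 * |β| / lam) ^ (p x) := by
          have habs : |f x - β| ≤ |f x| + |β| := abs_sub (f x) β
          rcases le_total (|f x|) (|β|) with hc | hc
          · have h1 : (|f x - β| / lam) ^ (p x) ≤ (2 * |β| / lam) ^ (p x) :=
              Real.rpow_le_rpow (by positivity)
                ((div_le_div_iff_of_pos_right hlam).2 (by linarith)) hq0
            exact h1.trans (le_add_of_nonneg_left (Real.rpow_nonneg (by positivity) _))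
          · have h1 : (|f x - β| / lam) ^ (p x) ≤ (2 * |f x| / lam) ^ (p x) :=
              Real.rpow_le_rpow (by positivity)
                ((div_le_div_iff_of_pos_right hlam).2 (by linarith)) hq0
            exact h1.trans (le_add_of_nonneg_right (Real.rpow_nonneg (by positivity) _))
        have htot : (|f x - β| / lam) ^ (p x) ≤ C1 * (|f x| / lf) ^ (p x) + C2 := by
          have := add_le_add step5 step6
          linarith [hmax]
        calc H x ≤ ENNReal.ofReal (C1 * (|f x| / lf) ^ (p x) + C2) :=
              ENNReal.ofReal_le_ofReal htot
          _ ≤ _ := ENNReal.ofReal_add_le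
      have hae1 : ∀ᵐ x ∂(μ.restrict (Set.Iic R)), x ∈ Set.Ici (1 : ℝ) :=
        Eventually.filter_mono (ae_mono Measure.restrict_le_self)
          (ae_restrict_mem measurableSet_Ici)
      have hae2 : ∀ᵐ x ∂(μ.restrict (Set.Iic R)), x ∈ Set.Iic R :=
        ae_restrict_mem measurableSet_Iic
      have hmeas0 : Measurable fun x => ENNReal.ofReal ((|f x| / lf) ^ (p x)) :=
        ENNReal.measurable_ofReal.comp ((hfm.abs.div_const lf).pow hpm)
      have hint : ∫⁻ x in Set.Iic R, H x ∂μ ≤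
          ∫⁻ x, (ENNReal.ofReal (C1 * (|f x| / lf) ^ (p x)) + ENNReal.ofReal C2)
            ∂(μ.restrict (Set.Iic R)) :=
        lintegral_mono_ae ((hae1.and hae2).mono fun x hx => hpt x hx.1 hx.2)
      rw [lintegral_add_right _ measurable_const] at hint
      have hint1 : ∫⁻ x, ENNReal.ofReal (C1 * (|f x| / lf) ^ (p x))
          ∂(μ.restrict (Set.Iic R)) ≤ ENNReal.ofReal C1 := by
        have e : ∀ x, ENNReal.ofReal (C1 * (|f x| / lf) ^ (p x)) =
            ENNReal.ofReal C1 * ENNReal.ofReal ((|f x| / lf) ^ (p x)) := fun x =>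
          ENNReal.ofReal_mul hC1
        simp_rw [e]
        rw [lintegral_const_mul _ hmeas0]
        calc ENNReal.ofReal C1 * ∫⁻ x, ENNReal.ofReal ((|f x| / lf) ^ (p x))
              ∂(μ.restrict (Set.Iic R))
            ≤ ENNReal.ofReal C1 * ∫⁻ x, ENNReal.ofReal ((|f x| / lf) ^ (p x)) ∂μ := by
              exact mul_le_mul_right (lintegral_mono' Measure.restrict_le_self (le_refl _)) _
          _ ≤ ENNReal.ofReal C1 * 1 := mul_le_mul_right hmlf _
          _ = ENNReal.ofReal C1 := mul_one _
      have hint2 : ∫⁻ _x, ENNReal.ofReal C2 ∂(μ.restrict (Set.Iic R)) =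
          ENNReal.ofReal C2 * μ (Set.Iic R) := by
        rw [lintegral_const, Measure.restrict_apply_univ]
      have hμIic : μ (Set.Iic R) < ⊤ := by
        rw [hμdef, Measure.restrict_apply measurableSet_Iic]
        have h : Set.Iic R ∩ Set.Ici (1 : ℝ) = Set.Icc 1 R := by
          ext y; simp [Set.mem_Icc, and_comm]
        rw [h, Real.volume_Icc]
        exact ENNReal.ofReal_lt_top
      calc ∫⁻ x in Set.Iic R, H x ∂μ
          ≤ _ + _ := hint
        _ ≤ ENNReal.ofReal C1 + ENNReal.ofReal C2 * μ (Set.Iic R) := by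
            rw [hint2]; exact add_le_add hint1 (le_refl _)
        _ < ⊤ := by
            apply ENNReal.add_lt_top.2
            exact ⟨ENNReal.ofReal_lt_top, ENNReal.mul_lt_top ENNReal.ofReal_lt_top hμIic⟩
    calc ∫⁻ x, H x ∂μ = _ := hsplit
      _ < ⊤ := by
          apply ENNReal.add_lt_top.2
          exact ⟨hcomp, lt_of_le_of_lt htailfin (by norm_num)⟩

  -- conclusion
  have hle : ∀ n : ℕ, qNormR (Set.Ici 1) p (fun x => f x - β) ≤ ENNReal.ofReal (1 / (n + 1)) :=
    fun n => sInf_le ⟨1 / (n + 1), ⟨by positivity, hfin _ (by positivity)⟩, rfl⟩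
  have htend : Tendsto (fun n : ℕ => ENNReal.ofReal (1 / (n + 1))) atTop (nhds 0) := by
    have h := ENNReal.tendsto_ofReal
      (tendsto_one_div_add_atTop_nhds_zero_nat)
    simpa using h
  exact le_antisymm (ge_of_tendsto htend (Eventually.of_forall hle)) zero_le
end
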